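/- Assume E[Y²] < ∞. Then for every bounded measurable Q : 𝒳 → ℝ: P_*(T(Q)² − T(Q_#)²) = E[((1 − π(X))/π(X))·(Q(X) − Q_#(X))²] + 2·E[((1 − π(X))/π(X))·(Q(X) − Q_#(X))·(Q_#(X) − Q_*(X))]. -/

import Mathlib

open MeasureTheory ProbabilityTheory

noncomputable section

lemma key_int {𝒳 Ω : Type*} {m𝒳 : MeasurableSpace 𝒳} {mΩ : MeasurableSpace Ω}
    (P : Measure Ω) [IsProbabilityMeasure P]
    (X : Ω → 𝒳) (hX : Measurable X)
    (f : 𝒳 → ℝ) (hf : Measurable f) (C : ℝ) (hfb : ∀ x, |f x| ≤ C)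
    (g : Ω → ℝ) (hg : Integrable g P) (h : 𝒳 → ℝ)
    (hgh : P[g | MeasurableSpace.comap X inferInstance] =ᵐ[P] fun ω => h (X ω)) :
    ∫ ω, f (X ω) * g ω ∂P = ∫ ω, f (X ω) * h (X ω) ∂P := by
  have hm : MeasurableSpace.comap X inferInstance ≤ mΩ := hX.comap_le
  have hXm : Measurable[MeasurableSpace.comap X inferInstance] X := fun s hs => ⟨s, hs, rfl⟩
  have hfXm : StronglyMeasurable[MeasurableSpace.comap X inferInstance] (fun ω => f (X ω)) :=
    (hf.comp hXm).stronglyMeasurable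
  have hfg : Integrable (fun ω => f (X ω) * g ω) P :=
    hg.bdd_mul ((hf.comp hX).aestronglyMeasurable)
      (Filter.Eventually.of_forall fun ω => by simpa using hfb (X ω))
  calc ∫ ω, f (X ω) * g ω ∂P
      = ∫ ω, (P[(fun ω => f (X ω) * g ω) | MeasurableSpace.comap X inferInstance]) ω ∂P :=
        (integral_condExp hm).symm
    _ = ∫ ω, f (X ω) * (P[g | MeasurableSpace.comap X inferInstance]) ω ∂P :=
        integral_congr_ae (condExp_mul_of_stronglyMeasurable_left hfXm hfg hg)
    _ = ∫ ω, f (X ω) * h (X ω) ∂P :=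
        integral_congr_ae (hgh.mono fun ω hω => by simp only [hω])

lemma integrable_of_bdd {Ω : Type*} {mΩ : MeasurableSpace Ω}
    (P : Measure Ω) [IsProbabilityMeasure P] {Z : Ω → ℝ}
    (hZ : AEStronglyMeasurable Z P) (C : ℝ) (hb : ∀ ω, |Z ω| ≤ C) :
    Integrable Z P :=
  (integrable_const C).mono' hZ (Filter.Eventually.of_forall fun ω => by simpa using hb ω)


/-- The AIPW transformation `T(Q)(x, a′, y) = 1{a′=a}·(y − Q(x))/π(x) + Q(x)`. -/
def Taipw {𝒳 : Type*} (ps : 𝒳 → ℝ) (a : Bool) (Q : 𝒳 → ℝ) (v : 𝒳 × Bool × ℝ) : ℝ :=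
  (if v.2.1 = a then (1 : ℝ) else 0) * (v.2.2 - Q v.1) / ps v.1 + Q v.1

/-- **Expected difference of squared transformations** (from Lemma S5).
In the randomized-trial setup, if `E[Y²] < ∞`, then for every bounded measurable `Q`:
`P_*(T(Q)² − T(Q_#)²) = E[((1−π(X))/π(X))·(Q(X) − Q_#(X))²]
  + 2·E[((1−π(X))/π(X))·(Q(X) − Q_#(X))·(Q_#(X) − Q_*(X))]`. -/
theorem expected_diff_squared_transform {𝒳 Ω : Type*}
    [MeasurableSpace 𝒳] [MeasurableSpace Ω]
    (P : Measure Ω) [IsProbabilityMeasure P]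
    (X : Ω → 𝒳) (A : Ω → Bool) (Y : Ω → ℝ)
    (hX : Measurable X) (hA : Measurable A) (hY : Measurable Y)
    (a : Bool) (ps : 𝒳 → ℝ) (hps : Measurable ps)
    (τ : ℝ) (hτ : 0 < τ) (hτ' : τ ≤ 1 / 2)
    (hpos : ∀ x, τ ≤ ps x ∧ ps x ≤ 1 - τ)
    (hprop : P[(fun ω => if A ω = a then (1 : ℝ) else 0) |
        MeasurableSpace.comap X inferInstance] =ᵐ[P] fun ω => ps (X ω))
    (Qstar : 𝒳 → ℝ) (hQstarm : Measurable Qstar)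
    (houtcome : P[(fun ω => (if A ω = a then (1 : ℝ) else 0) * Y ω) |
        MeasurableSpace.comap X inferInstance] =ᵐ[P] fun ω => ps (X ω) * Qstar (X ω))
    (hY2 : Integrable (fun ω => (Y ω) ^ 2) P)
    (Qref : 𝒳 → ℝ) (hQrefm : Measurable Qref)
    (Mref : ℝ) (hQrefb : ∀ x, |Qref x| ≤ Mref)
    (Q : 𝒳 → ℝ) (hQm : Measurable Q) (M : ℝ) (hQb : ∀ x, |Q x| ≤ M) :
    (∫ ω, ((Taipw ps a Q (X ω, A ω, Y ω)) ^ 2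
        - (Taipw ps a Qref (X ω, A ω, Y ω)) ^ 2) ∂P)
      = (∫ ω, ((1 - ps (X ω)) / ps (X ω)) * (Q (X ω) - Qref (X ω)) ^ 2 ∂P)
        + 2 * (∫ ω, ((1 - ps (X ω)) / ps (X ω)) * (Q (X ω) - Qref (X ω))
            * (Qref (X ω) - Qstar (X ω)) ∂P) := by
  -- basic positivity
  have hppos : ∀ x, 0 < ps x := fun x => lt_of_lt_of_le hτ (hpos x).1
  have hpne : ∀ x, ps x ≠ 0 := fun x => (hppos x).ne'
  have hple : ∀ x, ps x ≤ 1 := fun x => le_trans (hpos x).2 (by linarith)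
  -- the indicator
  set I : Ω → ℝ := fun ω => if A ω = a then (1 : ℝ) else 0 with hI_def
  have hIb : ∀ ω, |I ω| ≤ 1 := fun ω => by by_cases h : A ω = a <;> simp [I, h]
  have hIm : Measurable I := Measurable.ite (hA (MeasurableSet.singleton a)) measurable_const measurable_const
  have hIint : Integrable I P := integrable_of_bdd P hIm.aestronglyMeasurable 1 hIb
  have hYint : Integrable Y P :=
    ((memLp_two_iff_integrable_sq hY.aestronglyMeasurable).mpr hY2).integrable (by norm_num)
  have hIY : Integrable (fun ω => I ω * Y ω) P :=
    hYint.bdd_mul hIm.aestronglyMeasurable (Filter.Eventually.of_forall hIb)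
  -- the coefficient functions
  set f0 : 𝒳 → ℝ := fun x => Q x ^ 2 - Qref x ^ 2 with hf0_def
  set f1 : 𝒳 → ℝ := fun x => (Q x ^ 2 - Qref x ^ 2) * ((1 - 2 * ps x) / ps x ^ 2) with hf1_def
  set f2 : 𝒳 → ℝ := fun x => 2 * (Q x - Qref x) * ((ps x - 1) / ps x ^ 2) with hf2_def
  have hf0m : Measurable f0 := (hQm.pow_const 2).sub (hQrefm.pow_const 2)
  have hf1m : Measurable f1 :=
    hf0m.mul ((measurable_const.sub (hps.const_mul 2)).div (hps.pow_const 2))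
  have hf2m : Measurable f2 :=
    (((hQm.sub hQrefm).const_mul 2)).mul ((hps.sub measurable_const).div (hps.pow_const 2))
  -- bounds
  have hf0b : ∀ x, |f0 x| ≤ M ^ 2 + Mref ^ 2 := by
    intro x
    have h1 : |Q x ^ 2| ≤ M ^ 2 := by
      rw [abs_pow]; exact pow_le_pow_left₀ (abs_nonneg _) (hQb x) 2
    have h2 : |Qref x ^ 2| ≤ Mref ^ 2 := by
      rw [abs_pow]; exact pow_le_pow_left₀ (abs_nonneg _) (hQrefb x) 2
    calc |Q x ^ 2 - Qref x ^ 2| ≤ |Q x ^ 2| + |Qref x ^ 2| := abs_sub _ _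
      _ ≤ M ^ 2 + Mref ^ 2 := add_le_add h1 h2
  have hfrac : ∀ x, |(1 - 2 * ps x) / ps x ^ 2| ≤ 1 / τ ^ 2 := by
    intro x
    rw [abs_div, div_le_div_iff₀ (abs_pos.mpr (pow_ne_zero 2 (hpne x))) (by positivity)]
    have h1 : |1 - 2 * ps x| ≤ 1 := by
      rw [abs_le]; constructor <;> nlinarith [(hpos x).1, (hpos x).2, hppos x]
    have h2 : τ ^ 2 ≤ |ps x ^ 2| := by
      rw [abs_pow, abs_of_pos (hppos x)]
      exact pow_le_pow_left₀ hτ.le (hpos x).1 2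
    nlinarith [abs_nonneg (1 - 2 * ps x)]
  have hf1b : ∀ x, |f1 x| ≤ (M ^ 2 + Mref ^ 2) * (1 / τ ^ 2) := by
    intro x
    rw [hf1_def]
    simp only
    rw [abs_mul]
    exact mul_le_mul (hf0b x) (hfrac x) (abs_nonneg _) (by positivity)
  have hfrac2 : ∀ x, |(ps x - 1) / ps x ^ 2| ≤ 1 / τ ^ 2 := by
    intro x
    rw [abs_div, div_le_div_iff₀ (abs_pos.mpr (pow_ne_zero 2 (hpne x))) (by positivity)]
    have h1 : |ps x - 1| ≤ 1 := by
      rw [abs_le]; constructor <;> nlinarith [(hpos x).1, (hpos x).2, hppos x]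
    have h2 : τ ^ 2 ≤ |ps x ^ 2| := by
      rw [abs_pow, abs_of_pos (hppos x)]
      exact pow_le_pow_left₀ hτ.le (hpos x).1 2
    nlinarith [abs_nonneg (ps x - 1)]
  have hf2b : ∀ x, |f2 x| ≤ (2 * (M + Mref)) * (1 / τ ^ 2) := by
    intro x
    rw [hf2_def]
    simp only
    rw [abs_mul]
    refine mul_le_mul ?_ (hfrac2 x) (abs_nonneg _) ?_
    · rw [abs_mul, abs_two]
      have : |Q x - Qref x| ≤ M + Mref :=
        le_trans (abs_sub _ _) (add_le_add (hQb x) (hQrefb x))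
      nlinarith [abs_nonneg (Q x - Qref x)]
    · have := abs_nonneg (Q x); nlinarith [hQb x, hQrefb x, abs_nonneg (Qref x)]
  -- pointwise decomposition of the integrand
  have hdecomp : ∀ ω, (Taipw ps a Q (X ω, A ω, Y ω)) ^ 2
      - (Taipw ps a Qref (X ω, A ω, Y ω)) ^ 2
      = f0 (X ω) + f1 (X ω) * I ω + f2 (X ω) * (I ω * Y ω) := by
    intro ω
    simp only [Taipw, hf0_def, hf1_def, hf2_def, hI_def]
    have hp := hpne (X ω)
    by_cases h : A ω = a <;> simp only [h, if_true, if_false, if_pos, if_neg] <;>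
      field_simp <;> ring
  -- integrability of the three pieces
  have hQstarps : Integrable (fun ω => ps (X ω) * Qstar (X ω)) P :=
    (integrable_condExp).congr houtcome
  have hQstarX : Integrable (fun ω => Qstar (X ω)) P := by
    have : Integrable (fun ω => (1 / ps (X ω)) * (ps (X ω) * Qstar (X ω))) P :=
      hQstarps.bdd_mul (c := 1 / τ)
        ((measurable_const.div (hps.comp hX)).aestronglyMeasurable)
        (Filter.Eventually.of_forall fun ω => by
          rw [Real.norm_eq_abs, abs_div, abs_one, abs_of_pos (hppos (X ω))]
          exact div_le_div_of_nonneg_left one_pos.le hτ (hpos (X ω)).1 |>.trans le_rfl)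
    refine this.congr (Filter.Eventually.of_forall fun ω => ?_)
    field_simp
    exact mul_div_cancel_left₀ _ (hpne (X ω))
  have hint0 : Integrable (fun ω => f0 (X ω)) P :=
    integrable_of_bdd P ((hf0m.comp hX)).aestronglyMeasurable _ (fun ω => hf0b (X ω))
  have hint1 : Integrable (fun ω => f1 (X ω) * I ω) P :=
    hIint.bdd_mul ((hf1m.comp hX)).aestronglyMeasurable
      (Filter.Eventually.of_forall fun ω => by simpa using hf1b (X ω))
  have hint2 : Integrable (fun ω => f2 (X ω) * (I ω * Y ω)) P :=
    hIY.bdd_mul ((hf2m.comp hX)).aestronglyMeasurable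
      (Filter.Eventually.of_forall fun ω => by simpa using hf2b (X ω))
  -- split LHS
  have hsplit : (∫ ω, ((Taipw ps a Q (X ω, A ω, Y ω)) ^ 2
        - (Taipw ps a Qref (X ω, A ω, Y ω)) ^ 2) ∂P)
      = (∫ ω, f0 (X ω) ∂P) + (∫ ω, f1 (X ω) * I ω ∂P)
        + (∫ ω, f2 (X ω) * (I ω * Y ω) ∂P) := by
    have hint01 : Integrable (fun ω => f0 (X ω) + f1 (X ω) * I ω) P := hint0.add hint1
    calc (∫ ω, ((Taipw ps a Q (X ω, A ω, Y ω)) ^ 2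
            - (Taipw ps a Qref (X ω, A ω, Y ω)) ^ 2) ∂P)
        = ∫ ω, (f0 (X ω) + f1 (X ω) * I ω + f2 (X ω) * (I ω * Y ω)) ∂P :=
          integral_congr_ae (Filter.Eventually.of_forall hdecomp)
      _ = _ := by rw [integral_add hint01 hint2, integral_add hint0 hint1]
  -- apply the key conditional-expectation identities
  have hkey1 : (∫ ω, f1 (X ω) * I ω ∂P) = ∫ ω, f1 (X ω) * ps (X ω) ∂P :=
    key_int P X hX f1 hf1m _ hf1b I hIint ps hprop
  have hkey2 : (∫ ω, f2 (X ω) * (I ω * Y ω) ∂P)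
      = ∫ ω, f2 (X ω) * (ps (X ω) * Qstar (X ω)) ∂P :=
    key_int P X hX f2 hf2m _ hf2b (fun ω => I ω * Y ω) hIY
      (fun x => ps x * Qstar x) houtcome
  -- integrability on the RHS side
  have hg1int : Integrable (fun ω => ((1 - ps (X ω)) / ps (X ω)) * (Q (X ω) - Qref (X ω)) ^ 2) P := by
    refine integrable_of_bdd P ?_ ((1/τ) * (M + Mref) ^ 2) ?_
    · exact (((measurable_const.sub (hps.comp hX)).div (hps.comp hX)).mul
        (((hQm.comp hX).sub (hQrefm.comp hX)).pow_const 2)).aestronglyMeasurable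
    · intro ω
      rw [abs_mul]
      refine mul_le_mul ?_ ?_ (abs_nonneg _) (by positivity)
      · rw [abs_div, div_le_div_iff₀ (abs_pos.mpr (hpne (X ω))) hτ]
        rw [abs_of_pos (hppos (X ω))]
        have h1 : |1 - ps (X ω)| ≤ 1 := by
          rw [abs_le]; constructor <;> nlinarith [(hpos (X ω)).1, (hpos (X ω)).2]
        nlinarith [(hpos (X ω)).1, abs_nonneg (1 - ps (X ω))]
      · rw [abs_pow]
        refine pow_le_pow_left₀ (abs_nonneg _) ?_ 2
        exact le_trans (abs_sub _ _) (add_le_add (hQb (X ω)) (hQrefb (X ω)))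
  have hg2int : Integrable (fun ω => ((1 - ps (X ω)) / ps (X ω)) * (Q (X ω) - Qref (X ω))
      * (Qref (X ω) - Qstar (X ω))) P := by
    have hrs : Integrable (fun ω => Qref (X ω) - Qstar (X ω)) P :=
      (integrable_of_bdd P ((hQrefm.comp hX)).aestronglyMeasurable Mref
        (fun ω => hQrefb (X ω))).sub hQstarX
    refine (hrs.bdd_mul (c := (1/τ) * (M + Mref))
      ((((measurable_const.sub (hps.comp hX)).div (hps.comp hX)).mul
        ((hQm.comp hX).sub (hQrefm.comp hX))).aestronglyMeasurable) ?_)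
    refine Filter.Eventually.of_forall fun ω => ?_
    rw [Real.norm_eq_abs, abs_mul]
    refine mul_le_mul ?_ ?_ (abs_nonneg _) (by positivity)
    · rw [abs_div, div_le_div_iff₀ (abs_pos.mpr (hpne (X ω))) hτ]
      rw [abs_of_pos (hppos (X ω))]
      have h1 : |1 - ps (X ω)| ≤ 1 := by
        rw [abs_le]; constructor <;> nlinarith [(hpos (X ω)).1, (hpos (X ω)).2]
      nlinarith [(hpos (X ω)).1, abs_nonneg (1 - ps (X ω))]
    · exact le_trans (abs_sub _ _) (add_le_add (hQb (X ω)) (hQrefb (X ω)))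
  -- final pointwise identity and assembly
  have hfinal : ∀ x, f0 x + f1 x * ps x + f2 x * (ps x * Qstar x)
      = ((1 - ps x) / ps x) * (Q x - Qref x) ^ 2
        + 2 * (((1 - ps x) / ps x) * (Q x - Qref x) * (Qref x - Qstar x)) := by
    intro x
    have hp := hpne x
    simp only [hf0_def, hf1_def, hf2_def]
    field_simp
    ring
  rw [hsplit, hkey1, hkey2]
  have hint1' : Integrable (fun ω => f1 (X ω) * ps (X ω)) P :=
    integrable_of_bdd P (((hf1m.comp hX).mul (hps.comp hX))).aestronglyMeasurable
      ((M ^ 2 + Mref ^ 2) * (1 / τ ^ 2)) (fun ω => by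
        rw [abs_mul]
        calc |f1 (X ω)| * |ps (X ω)| ≤ ((M ^ 2 + Mref ^ 2) * (1 / τ ^ 2)) * 1 := by
              refine mul_le_mul (hf1b (X ω)) ?_ (abs_nonneg _) ?_
              · rw [abs_of_pos (hppos (X ω))]; exact hple (X ω)
              · positivity
          _ = (M ^ 2 + Mref ^ 2) * (1 / τ ^ 2) := mul_one _)
  have hint2' : Integrable (fun ω => f2 (X ω) * (ps (X ω) * Qstar (X ω))) P :=
    hQstarps.bdd_mul ((hf2m.comp hX)).aestronglyMeasurable
      (Filter.Eventually.of_forall fun ω => by simpa using hf2b (X ω))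
  have hint01' : Integrable (fun ω => f0 (X ω) + f1 (X ω) * ps (X ω)) P := hint0.add hint1'
  have e1 : (∫ ω, (f0 (X ω) + f1 (X ω) * ps (X ω)
        + f2 (X ω) * (ps (X ω) * Qstar (X ω))) ∂P)
      = (∫ ω, f0 (X ω) ∂P) + (∫ ω, f1 (X ω) * ps (X ω) ∂P)
        + (∫ ω, f2 (X ω) * (ps (X ω) * Qstar (X ω)) ∂P) := by
    rw [integral_add hint01' hint2', integral_add hint0 hint1']
  have e2 : (∫ ω, (((1 - ps (X ω)) / ps (X ω)) * (Q (X ω) - Qref (X ω)) ^ 2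
        + 2 * (((1 - ps (X ω)) / ps (X ω)) * (Q (X ω) - Qref (X ω))
            * (Qref (X ω) - Qstar (X ω)))) ∂P)
      = (∫ ω, ((1 - ps (X ω)) / ps (X ω)) * (Q (X ω) - Qref (X ω)) ^ 2 ∂P)
        + 2 * (∫ ω, ((1 - ps (X ω)) / ps (X ω)) * (Q (X ω) - Qref (X ω))
            * (Qref (X ω) - Qstar (X ω)) ∂P) := by
    rw [integral_add hg1int (hg2int.const_mul 2), integral_const_mul 2 _]
  rw [← e1, ← e2]
  exact integral_congr_ae (Filter.Eventually.of_forall fun ω => hfinal (X ω))
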